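/- (Dimension of the top irreducible component.) Fix integers m ≥ 2 and k ≥ 1. The kernel of the restricted lowering map L_k : End(P_k) → End(P_{k−1}) has dimension satisfying (m−1) · dim_ℂ ker(L_k) = (2k+m−1) · C(k+m−2, k)². Equivalently, dim_ℂ ker(L_k) = ((2k+m−1)/(m−1)) · C(k+m−2, k)², which is the Weyl dimension of the top irreducible U(m)-component λ_k^{(k)} of the k-photon operator space. -/

import Mathlib

set_option maxHeartbeats 2000000
set_option synthInstance.maxHeartbeats 2000000

open MvPolynomial

noncomputable section

/-- The `k`-photon sector `P_k`: homogeneous polynomials of degree `k` in `m` variables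
(the Bargmann realization of the `m`-mode bosonic Fock space). -/
abbrev P (m k : ℕ) : Submodule ℂ (MvPolynomial (Fin m) ℂ) :=
  homogeneousSubmodule (Fin m) ℂ k

lemma mulX_mem {m d : ℕ} (s : Fin m) {p : MvPolynomial (Fin m) ℂ} (hp : p ∈ P m d) :
    MvPolynomial.X s * p ∈ P m (d + 1) := by
  rw [mem_homogeneousSubmodule] at hp ⊢
  have := (isHomogeneous_X ℂ s).mul hp
  rwa [Nat.add_comm] at this

lemma degree_single_one {m : ℕ} (s : Fin m) : (Finsupp.single s 1).degree = 1 := by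
  rw [Finsupp.degree_apply, Finsupp.support_single_ne_zero _ one_ne_zero, Finset.sum_singleton,
    Finsupp.single_eq_same]

lemma pderiv_mem {m d : ℕ} (s : Fin m) {p : MvPolynomial (Fin m) ℂ}
    (hp : p ∈ P m (d + 1)) : MvPolynomial.pderiv s p ∈ P m d := by
  rw [mem_homogeneousSubmodule] at hp
  rw [as_sum p, map_sum]
  apply Submodule.sum_mem
  intro u hu
  rw [pderiv_monomial]
  by_cases h : u s = 0
  · simp [h]
  · rw [mem_homogeneousSubmodule]
    apply isHomogeneous_monomial
    have hle : Finsupp.single s 1 ≤ u :=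
      Finsupp.single_le_iff.mpr (Nat.one_le_iff_ne_zero.mpr h)
    have hsum : (u - Finsupp.single s 1) + Finsupp.single s 1 = u :=
      tsub_add_cancel_of_le hle
    have hdeg : u.degree = d + 1 := by
      have hc : coeff u p ≠ 0 := (mem_support_iff).mp hu
      have := hp hc
      rwa [Finsupp.degree_eq_weight_one]
    have hadd : (u - Finsupp.single s 1).degree + (Finsupp.single s 1).degree = u.degree := by
      simp_rw [Finsupp.degree_eq_weight_one]
      rw [← map_add, hsum]
    rw [degree_single_one] at hadd
    omega

instance instACG (m k : ℕ) : AddCommGroup (Module.End ℂ (P m k)) :=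
  LinearMap.addCommGroup

instance instMod (m k : ℕ) : Module ℂ (Module.End ℂ (P m k)) := inferInstance

/-- Multiplication by `x_s` as a linear map `P_d → P_{d+1}`. -/
def xRes (m d : ℕ) (s : Fin m) : P m d →ₗ[ℂ] P m (d + 1) :=
  (LinearMap.mulLeft ℂ (MvPolynomial.X s)).restrict fun _q hq => mulX_mem s hq

/-- The partial derivative `∂_s` as a linear map `P_{d+1} → P_d`. -/
def dRes (m d : ℕ) (s : Fin m) : P m (d + 1) →ₗ[ℂ] P m d :=
  (MvPolynomial.pderiv s).toLinearMap.restrict fun _q hq => pderiv_mem s hq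

/-- The restricted lowering map `L_{d+1} : End(P_{d+1}) → End(P_d)`,
`T ↦ Σ_s ∂_s ∘ T ∘ x_s`. -/
def Lres (m d : ℕ) :
    Module.End ℂ (P m (d + 1)) →ₗ[ℂ] Module.End ℂ (P m d) where
  toFun T := ∑ s, dRes m d s ∘ₗ T ∘ₗ xRes m d s
  map_add' T T' := by
    rw [← Finset.sum_add_distrib]
    exact Finset.sum_congr rfl fun s _ => by
      rw [LinearMap.add_comp, LinearMap.comp_add]
  map_smul' c T := by
    simp [Finset.smul_sum, LinearMap.smul_comp, LinearMap.comp_smul]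

/-- The restricted raising map `R_{d+1} : End(P_d) → End(P_{d+1})`,
`T ↦ Σ_s x_s ∘ T ∘ ∂_s`. -/
def Rres (m d : ℕ) :
    Module.End ℂ (P m d) →ₗ[ℂ] Module.End ℂ (P m (d + 1)) where
  toFun T := ∑ s, xRes m d s ∘ₗ T ∘ₗ dRes m d s
  map_add' T T' := by
    rw [← Finset.sum_add_distrib]
    exact Finset.sum_congr rfl fun s _ => by
      rw [LinearMap.add_comp, LinearMap.comp_add]
  map_smul' c T := by
    simp [Finset.smul_sum, LinearMap.smul_comp, LinearMap.comp_smul]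

end


lemma degree_eq_sum {α : Type*} (f : α →₀ ℕ) : f.degree = f.sum fun _ => id := rfl

noncomputable def degreeSym (m k : ℕ) : {d : Fin m →₀ ℕ // d.degree = k} ≃ Sym (Fin m) k where
  toFun d := ⟨Finsupp.toMultiset d.1, by rw [Finsupp.card_toMultiset, ← degree_eq_sum, d.2]⟩
  invFun s := ⟨Multiset.toFinsupp s.1, by
    rw [degree_eq_sum, Multiset.toFinsupp_sum_eq, s.2]⟩
  left_inv d := by ext1; simp
  right_inv s := by ext1; simp

noncomputable instance (m k : ℕ) : Fintype {d : Fin m →₀ ℕ // d.degree = k} :=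
  Fintype.ofEquiv _ (degreeSym m k).symm

lemma card_degree (m k : ℕ) :
    Fintype.card {d : Fin m →₀ ℕ // d.degree = k} = (k + m - 1).choose k := by
  rw [Fintype.card_congr (degreeSym m k), Sym.card_sym_eq_choose, Fintype.card_fin,
    Nat.add_comm]

noncomputable def equivP (m k : ℕ) : P m k ≃ₗ[ℂ] ({d : Fin m →₀ ℕ // d.degree = k} →₀ ℂ) :=
  (LinearEquiv.ofEq _ _ (homogeneousSubmodule_eq_finsupp_supported (Fin m) ℂ k)).trans
    (AddMonoidAlgebra.supportedEquivFinsupp _)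

instance (m k : ℕ) : Module.Finite ℂ (P m k) :=
  Module.Finite.equiv (equivP m k).symm

lemma finrank_P (m k : ℕ) : Module.finrank ℂ (P m k) = (k + m - 1).choose k := by
  rw [(equivP m k).finrank_eq, Module.finrank_finsupp_self, card_degree]

lemma finrank_End (m k : ℕ) :
    Module.finrank ℂ (Module.End ℂ (P m k)) = ((k + m - 1).choose k) ^ 2 := by
  rw [show Module.finrank ℂ (Module.End ℂ (P m k))
      = Module.finrank ℂ (P m k →ₗ[ℂ] P m k) from rfl,
    Module.finrank_linearMap, finrank_P, sq]

lemma euler_monomial {m : ℕ} (u : Fin m →₀ ℕ) (c : ℂ) :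
    ∑ s : Fin m, X s * pderiv s (monomial u c) = u.degree • monomial u c := by
  have h : ∀ s : Fin m, X s * pderiv s (monomial u c) = (u s) • monomial u c := by
    intro s
    rw [pderiv_monomial]
    by_cases h0 : u s = 0
    · simp [h0]
    · have hle : Finsupp.single s 1 ≤ u :=
        Finsupp.single_le_iff.mpr (Nat.one_le_iff_ne_zero.mpr h0)
      rw [X, monomial_mul, one_mul, add_tsub_cancel_of_le hle, smul_monomial]
      congr 1
      rw [nsmul_eq_mul]
      ring
  simp_rw [h, ← Finset.sum_smul]
  congr 1
  rw [Finsupp.degree]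
  exact (Finset.sum_subset (Finset.subset_univ _) (by
    intro x _ hx
    simpa using Finsupp.notMem_support_iff.mp hx)).symm

lemma euler_poly {m n : ℕ} {p : MvPolynomial (Fin m) ℂ}
    (hp : p ∈ homogeneousSubmodule (Fin m) ℂ n) :
    ∑ s : Fin m, X s * pderiv s p = n • p := by
  rw [mem_homogeneousSubmodule] at hp
  conv_lhs => rw [as_sum p]
  conv_rhs => rw [as_sum p]
  simp_rw [map_sum, Finset.mul_sum, Finset.smul_sum]
  rw [Finset.sum_comm]
  refine Finset.sum_congr rfl fun u hu => ?_
  rw [euler_monomial]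
  congr 1
  have := hp ((mem_support_iff).mp hu)
  rw [Finsupp.degree_eq_weight_one]; exact this

lemma pderiv_homog_zero {m : ℕ} (s : Fin m) {p : MvPolynomial (Fin m) ℂ}
    (hp : p ∈ homogeneousSubmodule (Fin m) ℂ 0) : pderiv s p = 0 := by
  rw [mem_homogeneousSubmodule] at hp
  rw [as_sum p, map_sum]
  refine Finset.sum_eq_zero fun u hu => ?_
  have h0 : u.degree = 0 := by
    have := hp ((mem_support_iff).mp hu)
    rwa [Finsupp.degree_eq_weight_one]
  have hs : u s = 0 := by
    have := Finsupp.le_degree s u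
    omega
  rw [pderiv_monomial, hs]
  simp

lemma pderiv_X_mul' {m : ℕ} (s t : Fin m) (p : MvPolynomial (Fin m) ℂ) :
    pderiv s (X t * p) = X t * pderiv s p + if s = t then p else 0 := by
  rw [pderiv_mul, pderiv_X, Pi.single_apply]
  by_cases h : s = t <;> simp [h, eq_comm, add_comm]

section Ops
open MvPolynomial
variable {m : ℕ}

lemma xRes_val (d : ℕ) (s : Fin m) (p : P m d) :
    (xRes m d s p : MvPolynomial (Fin m) ℂ) = X s * (p : MvPolynomial (Fin m) ℂ) := rfl

lemma dRes_val (d : ℕ) (s : Fin m) (p : P m (d + 1)) :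
    (dRes m d s p : MvPolynomial (Fin m) ℂ) = pderiv s (p : MvPolynomial (Fin m) ℂ) := rfl

lemma dRes_comp_xRes (e : ℕ) (s t : Fin m) :
    dRes m (e + 1) s ∘ₗ xRes m (e + 1) t
      = xRes m e t ∘ₗ dRes m e s + (if s = t then (1 : Module.End ℂ (P m (e + 1))) else 0) := by
  refine LinearMap.ext fun p => Subtype.ext ?_
  by_cases h : s = t <;>
    simp [h, LinearMap.comp_apply, LinearMap.add_apply, Submodule.coe_add, dRes_val,
      xRes_val, pderiv_X_mul']

lemma dRes_comp_xRes_zero (s t : Fin m) :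
    dRes m 0 s ∘ₗ xRes m 0 t = (if s = t then (1 : Module.End ℂ (P m 0)) else 0) := by
  refine LinearMap.ext fun p => Subtype.ext ?_
  by_cases h : s = t <;>
    simp [h, LinearMap.comp_apply, dRes_val, xRes_val, pderiv_X_mul',
      pderiv_homog_zero s p.2, pderiv_homog_zero t p.2]

lemma euler_op (e : ℕ) :
    (∑ s, xRes m e s ∘ₗ dRes m e s) = ((e + 1) • 1 : Module.End ℂ (P m (e + 1))) := by
  refine LinearMap.ext fun p => Subtype.ext ?_
  simp only [LinearMap.sum_apply, Submodule.coe_sum, LinearMap.comp_apply, xRes_val,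
    dRes_val, LinearMap.smul_apply, Module.End.one_apply, Submodule.coe_smul]
  rw [euler_poly p.2]
  simp
end Ops
section Key
open MvPolynomial
variable {m : ℕ}

lemma sumComp {ι : Type*} (s : Finset ι) {M N Q : Type*} [AddCommMonoid M] [AddCommMonoid N]
    [AddCommMonoid Q] [Module ℂ M] [Module ℂ N] [Module ℂ Q]
    (f : ι → N →ₗ[ℂ] Q) (g : M →ₗ[ℂ] N) :
    (∑ i ∈ s, f i) ∘ₗ g = ∑ i ∈ s, f i ∘ₗ g := by
  refine LinearMap.ext fun p => ?_
  simp [LinearMap.sum_apply]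

lemma compSum {ι : Type*} (s : Finset ι) {M N Q : Type*} [AddCommMonoid M] [AddCommMonoid N]
    [AddCommMonoid Q] [Module ℂ M] [Module ℂ N] [Module ℂ Q]
    (f : ι → M →ₗ[ℂ] N) (g : N →ₗ[ℂ] Q) :
    g ∘ₗ (∑ i ∈ s, f i) = ∑ i ∈ s, g ∘ₗ f i := by
  refine LinearMap.ext fun p => ?_
  simp [LinearMap.sum_apply, map_sum]

lemma LR_expand (d : ℕ) (T : Module.End ℂ (P m d)) :
    Lres m d (Rres m d T)
      = ∑ s, ∑ t, (dRes m d s ∘ₗ xRes m d t) ∘ₗ T ∘ₗ (dRes m d t ∘ₗ xRes m d s) := by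
  refine LinearMap.ext fun p => ?_
  show (∑ s, dRes m d s ∘ₗ (∑ t, xRes m d t ∘ₗ T ∘ₗ dRes m d t) ∘ₗ xRes m d s) p = _
  simp only [LinearMap.sum_apply, LinearMap.comp_apply, map_sum]

lemma key0 (T : Module.End ℂ (P m 0)) : Lres m 0 (Rres m 0 T) = m • T := by
  rw [LR_expand]
  have h : ∀ s t : Fin m,
      (dRes m 0 s ∘ₗ xRes m 0 t) ∘ₗ T ∘ₗ (dRes m 0 t ∘ₗ xRes m 0 s)
        = if s = t then T else 0 := by
    intro s t
    rw [dRes_comp_xRes_zero, dRes_comp_xRes_zero]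
    by_cases hst : s = t
    · subst hst
      simp only [if_pos rfl, Module.End.one_eq_id, LinearMap.id_comp, LinearMap.comp_id]
      simp
    · have hts : ¬ t = s := fun hh => hst hh.symm
      simp [hst, hts]
  simp_rw [h]
  simp

lemma keyRec (e : ℕ) (T : Module.End ℂ (P m (e + 1))) :
    Lres m (e + 1) (Rres m (e + 1) T)
      = (m + 2 * (e + 1)) • T + Rres m e (Lres m e T) := by
  rw [LR_expand]
  have expand : ∀ s t : Fin m,
      (dRes m (e+1) s ∘ₗ xRes m (e+1) t) ∘ₗ T ∘ₗ (dRes m (e+1) t ∘ₗ xRes m (e+1) s)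
        = (xRes m e t ∘ₗ dRes m e s) ∘ₗ T ∘ₗ (xRes m e s ∘ₗ dRes m e t)
          + ((if t = s then (xRes m e t ∘ₗ dRes m e s) ∘ₗ T else 0)
          + ((if s = t then T ∘ₗ (xRes m e s ∘ₗ dRes m e t) else 0)
          + (if s = t then T else 0))) := by
    intro s t
    rw [dRes_comp_xRes, dRes_comp_xRes]
    by_cases hst : s = t
    · subst hst
      simp only [if_pos rfl, LinearMap.comp_add, LinearMap.add_comp]
      refine LinearMap.ext fun p => ?_
      simp
      abel
    · have hts : ¬ t = s := fun hh => hst hh.symm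
      simp [hst, hts, LinearMap.comp_add, LinearMap.add_comp]
  simp_rw [expand, Finset.sum_add_distrib, Finset.sum_ite_eq, Finset.sum_ite_eq',
    Finset.mem_univ, if_true, Finset.sum_const, Finset.card_univ, Fintype.card_fin]
  have e1 : (∑ s : Fin m, (xRes m e s ∘ₗ dRes m e s) ∘ₗ T) = (e + 1) • T := by
    rw [← sumComp, euler_op]
    refine LinearMap.ext fun p => ?_
    simp
  have e2 : (∑ s : Fin m, T ∘ₗ (xRes m e s ∘ₗ dRes m e s)) = (e + 1) • T := by
    rw [← compSum, euler_op]
    refine LinearMap.ext fun p => ?_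
    simp
  have e3 : (∑ s : Fin m, ∑ t : Fin m,
      (xRes m e t ∘ₗ dRes m e s) ∘ₗ T ∘ₗ (xRes m e s ∘ₗ dRes m e t))
        = Rres m e (Lres m e T) := by
    rw [Finset.sum_comm]
    show _ = ∑ t, xRes m e t ∘ₗ (∑ s, dRes m e s ∘ₗ T ∘ₗ xRes m e s) ∘ₗ dRes m e t
    refine Finset.sum_congr rfl fun t _ => ?_
    rw [sumComp, compSum]
    refine Finset.sum_congr rfl fun s _ => ?_
    refine LinearMap.ext fun p => rfl
  rw [e1, e2, e3]
  have hsm : (m + 2 * (e + 1)) • T = (e + 1) • T + ((e + 1) • T + m • T) := by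
    rw [← add_nsmul, ← add_nsmul]
    congr 1
    ring
  rw [hsm]
  abel
end Key
section Main
open MvPolynomial

lemma nsmul_cancel {m k : ℕ} {b : ℕ} (hb : b ≠ 0) {T₁ T₂ : Module.End ℂ (P m k)}
    (h : b • T₁ = b • T₂) : T₁ = T₂ := by
  have h' : ((b : ℂ)) • T₁ = ((b : ℂ)) • T₂ := by
    rw [Nat.cast_smul_eq_nsmul, Nat.cast_smul_eq_nsmul]
    exact h
  exact smul_right_injective _ (Nat.cast_ne_zero.mpr hb) h'

lemma inj_aux (m : ℕ) (hm : 0 < m) (d : ℕ) : ∀ a : ℕ,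
    Function.Injective fun T : Module.End ℂ (P m d) =>
      a • T + Lres m d (Rres m d T) := by
  induction d with
  | zero =>
    intro a T₁ T₂ h
    simp only [key0] at h
    rw [← add_nsmul, ← add_nsmul] at h
    exact nsmul_cancel (by omega) h
  | succ e ih =>
    intro a T₁ T₂ h
    simp only [keyRec] at h
    rw [← add_assoc, ← add_assoc, ← add_nsmul, ← add_nsmul] at h
    set b := a + (m + 2 * (e + 1)) with hb
    have h2 := congrArg (Lres m e) h
    simp only [map_add, map_nsmul] at h2
    have hL : Lres m e T₁ = Lres m e T₂ := ih b h2
    rw [hL] at h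
    have h3 : b • T₁ = b • T₂ := add_right_cancel h
    exact nsmul_cancel (by omega) h3

lemma Lres_surj (m : ℕ) (hm : 0 < m) (d : ℕ) : Function.Surjective (Lres m d) := by
  have hinj : Function.Injective ((Lres m d) ∘ₗ (Rres m d)) := by
    have := inj_aux m hm d 0
    simpa [Function.comp_def] using this
  have hsurj := LinearMap.injective_iff_surjective.mp hinj
  intro S
  obtain ⟨T, hT⟩ := hsurj S
  exact ⟨Rres m d T, hT⟩

end Main

noncomputable instance endFD (m k : ℕ) : FiniteDimensional ℂ (Module.End ℂ (P m k)) :=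
  Module.Finite.equiv (LinearEquiv.refl ℂ (P m k →ₗ[ℂ] P m k))

theorem stmt16' (m j : ℕ) (hm : 2 ≤ m) :
    (m - 1) * Module.finrank ℂ (LinearMap.ker (Lres m j))
      = (2 * (j + 1) + m - 1) * (((j + 1) + m - 2).choose (j + 1)) ^ 2 := by
  have hr : LinearMap.range (Lres m j) = ⊤ :=
    LinearMap.range_eq_top.mpr (Lres_surj m (by omega) j)
  have hrank := LinearMap.finrank_range_add_finrank_ker (Lres m j)
  rw [hr, finrank_top, finrank_End, finrank_End] at hrank
  set K := Module.finrank ℂ (LinearMap.ker (Lres m j)) with hKdef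
  clear hr
  obtain ⟨n, rfl⟩ : ∃ n, m = n + 2 := ⟨m - 2, by omega⟩
  have e1 : j + (n + 2) - 1 = j + n + 1 := by omega
  have e2 : (j + 1) + (n + 2) - 1 = j + n + 2 := by omega
  rw [e1, e2] at hrank
  set A := (j + n + 2).choose (j + 1) with hA
  set B := (j + n + 1).choose j with hB
  set C := (j + n + 1).choose (j + 1) with hC
  have hpascal : A = B + C := Nat.choose_succ_succ (j + n + 1) j
  have h2 : (n + 1) * B = (j + 1) * C := by
    have := Nat.choose_succ_right_eq (j + n + 1) j
    rw [show j + n + 1 - j = n + 1 by omega] at this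
    rw [← hB, ← hC] at this
    nlinarith [this]
  have hK2 : K = 2 * B * C + C ^ 2 := by
    have hsq : A ^ 2 = B ^ 2 + (2 * B * C + C ^ 2) := by rw [hpascal]; ring
    rw [hsq] at hrank
    exact Nat.add_left_cancel hrank
  rw [show (n + 2) - 1 = n + 1 by omega,
    show 2 * (j + 1) + (n + 2) - 1 = 2 * j + n + 3 by omega,
    show (j + 1) + (n + 2) - 2 = j + n + 1 by omega, ← hC]
  have : (n + 1) * K = 2 * ((n + 1) * B) * C + (n + 1) * (C * C) := by rw [hK2]; ring
  rw [h2] at this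
  rw [this]
  ring

/-- Dimension of the top irreducible component. For `m ≥ 2` and
`k ≥ 1` (here `k = j + 1`), the kernel of the restricted lowering map
`L_k : End(P_k) → End(P_{k−1})` satisfies
`(m−1) · dim ker(L_k) = (2k+m−1) · C(k+m−2, k)²`, i.e. `dim ker(L_k)` is the Weyl
dimension of the top irreducible `U(m)`-component `λ_k^{(k)}` of the `k`-photon
operator space. -/
theorem stmt16 (m j : ℕ) (hm : 2 ≤ m) :
    (m - 1) * Module.finrank ℂ (LinearMap.ker (Lres m j))
      = (2 * (j + 1) + m - 1) * (((j + 1) + m - 2).choose (j + 1)) ^ 2 := by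
  exact stmt16' m j hm
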